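/- Let q be an odd prime and let k, P, Q be integers such that k² + Pk + Q is not divisible by q. If the Legendre symbol ((P² − 4Q)/q) equals 1, then V_{(q−1)/2}(P + 2k, k² + Pk + Q)² ≡ ((k² + Pk + Q)^{(q−1)/2} + 1)² (mod q²). -/

import Mathlib

/-- The Lucas sequence of the second kind `V_n(P, Q)`:
`V_0 = 2`, `V_1 = P`, `V_i = P * V_{i-1} - Q * V_{i-2}`. -/
def lucasV (P Q : ℤ) : ℕ → ℤ
  | 0 => 2
  | 1 => P
  | n + 2 => P * lucasV P Q (n + 1) - Q * lucasV P Q n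

lemma lucasV_cast {R : Type*} [CommRing R] (P Q : ℤ) (α β : R)
    (hs : α + β = (P : R)) (hp : α * β = (Q : R)) :
    ∀ n, ((lucasV P Q n : ℤ) : R) = α ^ n + β ^ n := by
  intro n
  induction n using Nat.twoStepInduction with
  | zero => norm_num [lucasV]
  | one => simpa [lucasV] using hs.symm
  | more n ih1 ih2 =>
    show ((P * lucasV P Q (n + 1) - Q * lucasV P Q n : ℤ) : R) = _
    push_cast
    rw [ih1, ih2, ← hs, ← hp]
    ring

lemma hensel_sqrt (q : ℕ) [Fact q.Prime] (hodd : Odd q) (D : ℤ)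
    (hD : legendreSym q D = 1) : ∃ s : ℤ, ((q : ℤ)) ^ 2 ∣ s ^ 2 - D := by
  have hD0 : (D : ZMod q) ≠ 0 := by
    intro h
    rw [← legendreSym.eq_zero_iff] at h
    omega
  obtain ⟨r, hr⟩ := (legendreSym.eq_one_iff q hD0).mp hD
  set t : ℤ := (r.val : ℤ) with htdef
  have ht : ((t : ℤ) : ZMod q) = r := by
    simp [htdef, ZMod.natCast_val, ZMod.cast_id]
  have hq1 : (q : ℤ) ∣ t ^ 2 - D := by
    rw [← ZMod.intCast_zmod_eq_zero_iff_dvd]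
    push_cast
    rw [ht]
    linear_combination -hr
  obtain ⟨c, hc⟩ := hq1
  have hr0 : r ≠ 0 := by
    intro h; apply hD0; rw [hr, h, mul_zero]
  have h20 : ((2 * t : ℤ) : ZMod q) ≠ 0 := by
    push_cast
    rw [ht]
    have h2 : (2 : ZMod q) ≠ 0 := by
      have : ((2 : ℕ) : ZMod q) ≠ 0 := by
        rw [Ne, ZMod.natCast_eq_zero_iff]
        intro h
        obtain ⟨r', hr'⟩ := hodd
        have := Nat.le_of_dvd two_pos h
        have := (Fact.out : q.Prime).two_le
        omega
      simpa using this
    exact mul_ne_zero h2 hr0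
  set X : ZMod q := ((2 * t : ℤ) : ZMod q) with hX
  have hinv : X * X⁻¹ = 1 := mul_inv_cancel₀ h20
  set w : ZMod q := (-(c : ZMod q)) * X⁻¹ with hw
  set e : ℤ := (w.val : ℤ) with hedef
  have he : ((e : ℤ) : ZMod q) = w := by
    simp [hedef, ZMod.natCast_val, ZMod.cast_id]
  have hkey : (q : ℤ) ∣ c + 2 * t * e := by
    rw [← ZMod.intCast_zmod_eq_zero_iff_dvd]
    push_cast
    rw [he]
    have hXe : ((2 : ZMod q) * ((t : ℤ) : ZMod q)) = X := by push_cast [hX]; ring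
    rw [hw]
    linear_combination (-(c : ZMod q)) * hinv + (-(c:ZMod q) * X⁻¹) * hXe
  obtain ⟨d, hd⟩ := hkey
  exact ⟨t + q * e, d + e ^ 2, by linear_combination hc + (q : ℤ) * hd⟩

lemma mul_eq_zero_of_cast_eq_zero (q : ℕ) [NeZero q] (x y : ZMod (q ^ 2))
    (hx : ZMod.castHom (dvd_pow_self q two_ne_zero) (ZMod q) x = 0)
    (hy : ZMod.castHom (dvd_pow_self q two_ne_zero) (ZMod q) y = 0) :
    x * y = 0 := by
  obtain ⟨a, rfl⟩ := ZMod.intCast_surjective x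
  obtain ⟨b, rfl⟩ := ZMod.intCast_surjective y
  rw [map_intCast, ZMod.intCast_zmod_eq_zero_iff_dvd] at hx hy
  rw [← Int.cast_mul, ZMod.intCast_zmod_eq_zero_iff_dvd]
  push_cast
  calc ((q : ℤ)) ^ 2 = q * q := sq (q : ℤ)
  _ ∣ a * b := mul_dvd_mul hx hy

/-- **Corollary 2, (16).** If `q` is an odd prime, `q ∤ k² + Pk + Q` and
`(P² - 4Q / q) = 1`, then
`V_{(q-1)/2}(P + 2k, k² + Pk + Q)² ≡ ((k² + Pk + Q)^{(q-1)/2} + 1)² (mod q²)`. -/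
theorem lucasV_shift_half_sq_congr (q : ℕ) [Fact q.Prime] (hodd : Odd q) (k P Q : ℤ)
    (hk : ¬ (q : ℤ) ∣ (k ^ 2 + P * k + Q)) (hleg : legendreSym q (P ^ 2 - 4 * Q) = 1) :
    lucasV (P + 2 * k) (k ^ 2 + P * k + Q) ((q - 1) / 2) ^ 2 ≡
      ((k ^ 2 + P * k + Q) ^ ((q - 1) / 2) + 1) ^ 2 [ZMOD (q : ℤ) ^ 2] := by
  have hq : q.Prime := Fact.out
  set m : ℕ := (q - 1) / 2 with hmdef
  set Q' : ℤ := k ^ 2 + P * k + Q with hQ'def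
  set P' : ℤ := P + 2 * k with hP'def
  obtain ⟨s, hs⟩ := hensel_sqrt q hodd _ hleg
  -- reduce to an equality in `ZMod (q ^ 2)`
  have hmodulus : ((q : ℤ)) ^ 2 = ((q ^ 2 : ℕ) : ℤ) := by push_cast; ring
  rw [hmodulus, ← ZMod.intCast_eq_intCast_iff]
  set R := ZMod (q ^ 2) with hR
  -- invert 2
  have hcop : Nat.Coprime 2 (q ^ 2) := Nat.coprime_two_left.mpr (hodd.pow)
  have h2u : IsUnit (2 : R) := by
    have := (ZMod.isUnit_iff_coprime 2 (q ^ 2)).mpr hcop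
    simpa using this
  obtain ⟨u, hu⟩ := h2u.exists_right_inv
  -- square root of the discriminant
  have hss : ((s : ℤ) : R) ^ 2 = ((P ^ 2 - 4 * Q : ℤ) : R) := by
    have : ((s ^ 2 - (P ^ 2 - 4 * Q) : ℤ) : R) = 0 := by
      rw [ZMod.intCast_zmod_eq_zero_iff_dvd]
      rwa [← hmodulus]
    push_cast at this ⊢
    linear_combination this
  set α : R := u * (((P' : ℤ) : R) + ((s : ℤ) : R)) with hα
  set β : R := u * (((P' : ℤ) : R) - ((s : ℤ) : R)) with hβ
  have hsum : α + β = ((P' : ℤ) : R) := by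
    rw [hα, hβ]
    linear_combination ((P' : ℤ) : R) * hu
  have hD' : ((P ^ 2 - 4 * Q : ℤ) : R) = ((P' : ℤ) : R) ^ 2 - 4 * ((Q' : ℤ) : R) := by
    show ((P ^ 2 - 4 * Q : ℤ) : ZMod (q ^ 2)) = ((P' : ℤ) : ZMod (q ^ 2)) ^ 2 - 4 * ((Q' : ℤ) : ZMod (q ^ 2))
    push_cast [hP'def, hQ'def]
    ring
  have hsc : ((s : ℤ) : R) ^ 2 = ((P' : ℤ) : R) ^ 2 - 4 * ((Q' : ℤ) : R) := by
    rw [hss, hD']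
  have hprod : α * β = ((Q' : ℤ) : R) := by
    rw [hα, hβ]
    linear_combination (-(u ^ 2)) * hsc + (((Q' : ℤ) : R) * (2 * u + 1)) * hu
  clear_value α β
  have hcast := lucasV_cast P' Q' α β hsum hprod
  -- the key vanishing product
  have hm2 : q - 1 = m * 2 := by
    obtain ⟨r, hr⟩ := hodd
    omega
  set φ := ZMod.castHom (dvd_pow_self q two_ne_zero) (ZMod q) with hφ
  have hQ0 : ((Q' : ℤ) : ZMod q) ≠ 0 := by
    rwa [Ne, ZMod.intCast_zmod_eq_zero_iff_dvd]
  have hφprod : φ α * φ β = ((Q' : ℤ) : ZMod q) := by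
    rw [← map_mul, hprod, map_intCast]
  have hα0 : φ α ≠ 0 := by
    intro h; exact hQ0 (by rw [← hφprod, h, zero_mul])
  have hβ0 : φ β ≠ 0 := by
    intro h; exact hQ0 (by rw [← hφprod, h, mul_zero])
  have key : (α ^ (q - 1) - 1) * (β ^ (q - 1) - 1) = 0 := by
    apply mul_eq_zero_of_cast_eq_zero q
    · rw [map_sub, map_pow, map_one, ZMod.pow_card_sub_one_eq_one hα0, sub_self]
    · rw [map_sub, map_pow, map_one, ZMod.pow_card_sub_one_eq_one hβ0, sub_self]
  rw [hm2, pow_mul, pow_mul] at key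
  -- finish
  push_cast
  rw [hcast m, ← hprod, mul_pow]
  linear_combination -key
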